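/- Optimal quantum score: with X, Y, H as above and tₖ = 2πk/(3ω), the state |P₃⟩ := (|0⟩ - |3⟩)/√2 achieves (1/3)∑_{k=0}^{2} ⟨P₃| e^{iHtₖ} Π₊ e^{-iHtₖ} |P₃⟩ = (1 + x₊/x₋)⁻¹, where Π₊ is the projector onto the positive eigenspaces of X (spanned by the eigenvectors with eigenvalues x₊ and x₋). -/

import Mathlib

open Real Matrix Complex
set_option maxHeartbeats 2000000

theorem stmt_11 (xp xm ω : ℝ) (hxp : 0 < xp) (hlt : xp < xm) (hω : 0 < ω)
    (H : Matrix (Fin 4) (Fin 4) ℂ)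
    (hH : H = Matrix.diagonal ![0, (ω : ℂ), (2 * ω : ℂ), (3 * ω : ℂ)])
    (t : Fin 3 → ℝ) (ht : ∀ k : Fin 3, t k = 2 * π * k / (3 * ω))
    (vm vp : Fin 4 → ℂ)
    (hvm : vm = ![(Real.sqrt xp : ℂ), (Real.sqrt xm : ℂ), (Real.sqrt xm : ℂ), (Real.sqrt xp : ℂ)])
    (hvp : vp = ![(Real.sqrt xm : ℂ), (Real.sqrt xp : ℂ), (-Real.sqrt xp : ℂ), (-Real.sqrt xm : ℂ)])
    (Pp : Matrix (Fin 4) (Fin 4) ℂ)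
    (hPp : Pp = ((2 * (xp + xm) : ℝ) : ℂ)⁻¹ •
      (Matrix.vecMulVec vm (star vm) + Matrix.vecMulVec vp (star vp)))
    (ψ : Fin 4 → ℂ)
    (hψ : ψ = ![((1 / Real.sqrt 2 : ℝ) : ℂ), 0, 0, ((-(1 / Real.sqrt 2) : ℝ) : ℂ)]) :
    (1 / 3 : ℂ) * ∑ k : Fin 3,
      star ψ ⬝ᵥ ((NormedSpace.exp ((Complex.I * (t k : ℝ)) • H) * Pp *
        NormedSpace.exp ((-Complex.I * (t k : ℝ)) • H)).mulVec ψ)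
      = (((1 + xp / xm)⁻¹ : ℝ) : ℂ) := by
  subst hH hPp hψ hvm hvp
  have hωC : (ω : ℂ) ≠ 0 := by exact_mod_cast hω.ne'
  have hexpD : ∀ c : ℂ,
      NormedSpace.exp (c • (Matrix.diagonal ![0, (ω : ℂ), (2 * ω : ℂ), (3 * ω : ℂ)])) =
      Matrix.diagonal ![1, Complex.exp (c * ω), Complex.exp (c * (2 * ω)),
        Complex.exp (c * (3 * ω))] := by
    intro c
    rw [← Matrix.diagonal_smul, Matrix.exp_diagonal, Pi.exp_def]
    ext i j
    fin_cases i <;> fin_cases j <;> simp [← Complex.exp_eq_exp_ℂ, Matrix.diagonal]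
  have key : ∀ k : Fin 3, Complex.exp (Complex.I * ((t k : ℝ) : ℂ) * (3 * ω)) = 1 := by
    intro k
    have h : Complex.I * ((t k : ℝ) : ℂ) * (3 * ω) = ((k : ℕ) : ℂ) * (2 * π * Complex.I) := by
      rw [ht k]
      push_cast
      field_simp
    rw [h]
    exact_mod_cast Complex.exp_int_mul_two_pi_mul_I (k : ℕ)
  have key2 : ∀ k : Fin 3, Complex.exp (-Complex.I * ((t k : ℝ) : ℂ) * (3 * ω)) = 1 := by
    intro k
    have h : -Complex.I * ((t k : ℝ) : ℂ) * (3 * ω) =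
        -(Complex.I * ((t k : ℝ) : ℂ) * (3 * ω)) := by ring
    rw [h, Complex.exp_neg, key k, inv_one]
  have hp : (Real.sqrt xp : ℂ) * (Real.sqrt xp : ℂ) = (xp : ℂ) := by
    rw [← Complex.ofReal_mul, Real.mul_self_sqrt hxp.le]
  have hm : (Real.sqrt xm : ℂ) * (Real.sqrt xm : ℂ) = (xm : ℂ) := by
    rw [← Complex.ofReal_mul, Real.mul_self_sqrt (hxp.trans hlt).le]
  have h2 : (Real.sqrt 2 : ℂ) * (Real.sqrt 2 : ℂ) = 2 := by
    rw [← Complex.ofReal_mul, Real.mul_self_sqrt (by norm_num)]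
    norm_num
  have hsum : ∀ k : Fin 3,
      star ![((1 / Real.sqrt 2 : ℝ) : ℂ), 0, 0, ((-(1 / Real.sqrt 2) : ℝ) : ℂ)] ⬝ᵥ
      ((NormedSpace.exp ((Complex.I * (t k : ℝ)) • Matrix.diagonal ![0, (ω : ℂ), (2 * ω : ℂ), (3 * ω : ℂ)]) *
        (((2 * (xp + xm) : ℝ) : ℂ)⁻¹ •
          (Matrix.vecMulVec ![(Real.sqrt xp : ℂ), (Real.sqrt xm : ℂ), (Real.sqrt xm : ℂ), (Real.sqrt xp : ℂ)]
              (star ![(Real.sqrt xp : ℂ), (Real.sqrt xm : ℂ), (Real.sqrt xm : ℂ), (Real.sqrt xp : ℂ)]) +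
            Matrix.vecMulVec ![(Real.sqrt xm : ℂ), (Real.sqrt xp : ℂ), (-Real.sqrt xp : ℂ), (-Real.sqrt xm : ℂ)]
              (star ![(Real.sqrt xm : ℂ), (Real.sqrt xp : ℂ), (-Real.sqrt xp : ℂ), (-Real.sqrt xm : ℂ)]))) *
        NormedSpace.exp ((-Complex.I * (t k : ℝ)) • Matrix.diagonal ![0, (ω : ℂ), (2 * ω : ℂ), (3 * ω : ℂ)])).mulVec
        ![((1 / Real.sqrt 2 : ℝ) : ℂ), 0, 0, ((-(1 / Real.sqrt 2) : ℝ) : ℂ)])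
      = ((2 * (xp + xm) : ℝ) : ℂ)⁻¹ * (2 * xm) := by
    intro k
    rw [hexpD, hexpD]
    simp only [Matrix.mul_apply, Matrix.mulVec, dotProduct, Fin.sum_univ_four,
      Matrix.diagonal_apply, Matrix.smul_apply, Matrix.add_apply, Matrix.vecMulVec_apply,
      Pi.star_apply, Matrix.cons_val_zero, Matrix.cons_val_one, Matrix.head_cons,
      Matrix.cons_val_two, Matrix.tail_cons, Matrix.cons_val_three]
    simp only [key k, key2 k]
    simp only [star_def, Complex.conj_ofReal, map_neg]
    simp only [Fin.isValue, show ((0:Fin 4) = 2) = False by decide, show ((0:Fin 4) = 3) = False by decide,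
      show ((2:Fin 4) = 0) = False by decide, show ((3:Fin 4) = 0) = False by decide,
      show ((1:Fin 4) = 3) = False by decide, show ((3:Fin 4) = 1) = False by decide,
      show ((3:Fin 4) = 2) = False by decide, show ((2:Fin 4) = 3) = False by decide,
      show ((2:Fin 4) = 1) = False by decide, show ((1:Fin 4) = 2) = False by decide,
      show ((0:Fin 4) = 1) = False by decide, show ((1:Fin 4) = 0) = False by decide,
      if_false, if_true]
    norm_num
    field_simp
    ring_nf
    rw [show ((Real.sqrt 2 : ℝ) : ℂ) ^ 2 = (2 : ℂ) by rw [sq, h2],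
      show ((Real.sqrt xm : ℝ) : ℂ) ^ 2 = (xm : ℂ) by rw [sq, hm]]
    have hS : (xp : ℂ) + (xm : ℂ) ≠ 0 := by
      have : (0:ℝ) < xp + xm := by linarith
      exact_mod_cast this.ne'
    ring
  rw [Finset.sum_congr rfl fun k _ => hsum k]
  simp only [Finset.sum_const, Finset.card_univ, Fintype.card_fin, nsmul_eq_mul]
  have hxpm : (xp : ℂ) + (xm : ℂ) ≠ 0 := by
    have : (0:ℝ) < xp + xm := by linarith
    exact_mod_cast this.ne'
  have hxmC : (xm : ℂ) ≠ 0 := by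
    have : (0:ℝ) < xm := hxp.trans hlt
    exact_mod_cast this.ne'
  have hxm0 : xm ≠ 0 := (hxp.trans hlt).ne'
  have : ((1 + xp / xm)⁻¹ : ℝ) = xm / (xp + xm) := by
    rw [show 1 + xp / xm = (xm + xp) / xm by field_simp, inv_div, add_comm xm xp]
  rw [this]
  push_cast
  field_simp
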